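/- arXiv:2504.16654 — 2 statements merged into one kernel-verified Lean document; each statement's English description precedes it below -/
import Mathlib

section
/- Let u rationalise the dataset {(p_i, q_i)} and let e(p, u(q_v)) = inf{ p · q : u(q) ≥ u(q_v) } be the expenditure function at base utility u(q_v). Define M⁻(p, v) = inf{ p · q : p_i · q ≥ p_i · q_i for all i ∈ VRW(v) } where VRW(v) = { i : there is an RP-walk from v to i }, and M⁺(p, v) = min{ p · q_i : i ∈ VRP(v) } where VRP(v) = { i : there is an RP-walk from i to v }. Then M⁻(p, v) ≤ e(p, u(q_v)) ≤ M⁺(p, v). -/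
/-- Inner product of a price and a quantity vector. -/
def dotp {K : ℕ} (x y : Fin K → ℝ) : ℝ := ∑ k, x k * y k

/-- One directed edge of the Laspeyres-weighted graph has weight ≤ 1. -/
def RPstep {N K : ℕ} (p q : Fin N → Fin K → ℝ) (i j : Fin N) : Prop :=
  dotp (p i) (q j) ≤ dotp (p i) (q i)

/-- `i R j`: existence of an RP-walk (all edge weights ≤ 1) from `i` to `j`. -/
def RPrel {N K : ℕ} (p q : Fin N → Fin K → ℝ) : Fin N → Fin N → Prop :=
  Relation.ReflTransGen (RPstep p q)

/-- `VRW(v)`: countries reachable from `v` by an RP-walk (revealed worse set). -/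
def VRW {N K : ℕ} (p q : Fin N → Fin K → ℝ) (v : Fin N) : Set (Fin N) :=
  {i | RPrel p q v i}

/-- `VRP(v)`: countries from which there is an RP-walk to `v` (revealed preferred set). -/
def VRP {N K : ℕ} (p q : Fin N → Fin K → ℝ) (v : Fin N) : Set (Fin N) :=
  {i | RPrel p q i v}

/-- Lower bound `M⁻(pr, v)` on the expenditure function: infimum of `pr · x` over
nonnegative bundles `x` with `p_i · x ≥ p_i · q_i` for all `i ∈ VRW(v)`. -/
noncomputable def Mminus {N K : ℕ} (p q : Fin N → Fin K → ℝ)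
    (pr : Fin K → ℝ) (v : Fin N) : ℝ :=
  sInf {r | ∃ x : Fin K → ℝ, (∀ k, 0 ≤ x k) ∧
    (∀ i ∈ VRW p q v, dotp (p i) (q i) ≤ dotp (p i) x) ∧ r = dotp pr x}

/-- Upper bound `M⁺(pr, v)` on the expenditure function: minimum of `pr · q_i` over
`i ∈ VRP(v)`. -/
noncomputable def Mplus {N K : ℕ} (p q : Fin N → Fin K → ℝ)
    (pr : Fin K → ℝ) (v : Fin N) : ℝ :=
  sInf {r | ∃ i ∈ VRP p q v, r = dotp pr (q i)}

/-- Expenditure function `e(pr, u(x₀)) = inf { pr · x : u(x) ≥ u(x₀), x ≥ 0 }`. -/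
noncomputable def expend {K : ℕ} (u : (Fin K → ℝ) → ℝ)
    (pr : Fin K → ℝ) (x₀ : Fin K → ℝ) : ℝ :=
  sInf {r | ∃ x : Fin K → ℝ, (∀ k, 0 ≤ x k) ∧ u x₀ ≤ u x ∧ r = dotp pr x}

/-- Varian's expenditure bounds: if `u` is a locally non-satiated,
continuous, concave and strictly monotone utility rationalising the dataset, then
`M⁻(p, v) ≤ e(p, u(q_v)) ≤ M⁺(p, v)`. -/
theorem stmt_4 {N K : ℕ} (p q : Fin N → Fin K → ℝ)
    (hp : ∀ i k, 0 < p i k) (hq : ∀ i k, 0 ≤ q i k)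
    (hm : ∀ i, 0 < dotp (p i) (q i))
    (u : (Fin K → ℝ) → ℝ)
    (hcont : Continuous u)
    (hconc : ConcaveOn ℝ {x : Fin K → ℝ | ∀ k, 0 ≤ x k} u)
    (hmono : ∀ x y : Fin K → ℝ, (∀ k, x k ≤ y k) → x ≠ y → u x < u y)
    (hlns : ∀ x : Fin K → ℝ, (∀ k, 0 ≤ x k) → ∀ ε > (0 : ℝ),
      ∃ y : Fin K → ℝ, (∀ k, 0 ≤ y k) ∧ dist y x < ε ∧ u x < u y)
    (hrat : ∀ i, ∀ x : Fin K → ℝ, (∀ k, 0 ≤ x k) →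
      dotp (p i) x ≤ dotp (p i) (q i) → u x ≤ u (q i))
    (pr : Fin K → ℝ) (hpr : ∀ k, 0 < pr k) (v : Fin N) :
    Mminus p q pr v ≤ expend u pr (q v) ∧ expend u pr (q v) ≤ Mplus p q pr v := by

  have chain : ∀ a b : Fin N, RPrel p q a b → u (q b) ≤ u (q a) := by
    intro a b h
    induction h with
    | refl => exact le_refl _
    | tail hab hstep ih =>
        exact le_trans (hrat _ _ (fun k => hq _ k) hstep) ih
  have hbd0 : ∀ x : Fin K → ℝ, (∀ k, 0 ≤ x k) → 0 ≤ dotp pr x := by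
    intro x hx
    exact Finset.sum_nonneg fun k _ => mul_nonneg (hpr k).le (hx k)
  have hSexp_ne : (Set.Nonempty {r | ∃ x : Fin K → ℝ, (∀ k, 0 ≤ x k) ∧ u (q v) ≤ u x ∧ r = dotp pr x}) :=
    ⟨dotp pr (q v), q v, fun k => hq v k, le_refl _, rfl⟩
  have hSexp_bdd : BddBelow {r | ∃ x : Fin K → ℝ, (∀ k, 0 ≤ x k) ∧ u (q v) ≤ u x ∧ r = dotp pr x} := by
    refine ⟨0, ?_⟩
    rintro r ⟨x, hx, -, rfl⟩
    exact hbd0 x hx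
  have hSminus_bdd : BddBelow {r | ∃ x : Fin K → ℝ, (∀ k, 0 ≤ x k) ∧
      (∀ i ∈ VRW p q v, dotp (p i) (q i) ≤ dotp (p i) x) ∧ r = dotp pr x} := by
    refine ⟨0, ?_⟩
    rintro r ⟨x, hx, -, rfl⟩
    exact hbd0 x hx
  constructor
  · apply csInf_le_csInf hSminus_bdd hSexp_ne
    rintro r ⟨x, hx, hux, rfl⟩
    refine ⟨x, hx, ?_, rfl⟩
    intro i hi
    by_contra hlt
    push_neg at hlt
    have hcontd : Continuous fun y : Fin K → ℝ => dotp (p i) y := by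
      unfold dotp
      exact continuous_finset_sum _ fun k _ => continuous_const.mul (continuous_apply k)
    have hopen : IsOpen {y : Fin K → ℝ | dotp (p i) y < dotp (p i) (q i)} :=
      isOpen_lt hcontd continuous_const
    obtain ⟨ε, hε, hball⟩ := Metric.isOpen_iff.mp hopen x hlt
    obtain ⟨y, hy0, hyd, huy⟩ := hlns x hx ε hε
    have hmem : dotp (p i) y < dotp (p i) (q i) := hball (Metric.mem_ball.mpr hyd)
    have h1 : u y ≤ u (q i) := hrat i y hy0 hmem.le
    have h2 : u (q i) ≤ u (q v) := chain v i hi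
    linarith
  · have hne : (Set.Nonempty {r | ∃ i ∈ VRP p q v, r = dotp pr (q i)}) := by
      refine ⟨dotp pr (q v), ?_⟩
      exact ⟨v, Relation.ReflTransGen.refl, rfl⟩
    apply le_csInf hne
    rintro r ⟨i, hi, rfl⟩
    exact csInf_le hSexp_bdd ⟨q i, fun k => hq i k, chain i v hi, rfl⟩
end

section
/- Suppose dataset D = {(p_i, q_i)}_{i=1}^N admits a rationalising utility u_RC (locally non-satiated, continuous, concave, strictly monotone). Then for every pair of countries i, j, the Konüs cost-of-living index satisfies the two-sided sandwich: min_k (p_j^k/p_i^k) ≤ M⁻(p_j, v_i)/M⁻(p_i, v_i) ≤ e(p_j, u_RC(q_i))/e(p_i, u_RC(q_i)) ≤ M⁺(p_j, v_i)/M⁺(p_i, v_i) ≤ (p_j · q_i)/(p_i · q_i), where the outer bounds are the classical minimum price relative and Laspeyres price index. -/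
lemma dotp_nonneg' {K : ℕ} {x y : Fin K → ℝ} (hx : ∀ k, 0 ≤ x k) (hy : ∀ k, 0 ≤ y k) :
    0 ≤ dotp x y :=
  Finset.sum_nonneg fun k _ => mul_nonneg (hx k) (hy k)

/-- Bump lemma: any nonneg bundle at least as good as `ql` costs at least `pl · ql`. -/
lemma key_bump {K : ℕ} (hK : 0 < K) (pl x ql : Fin K → ℝ) (hp : ∀ k, 0 < pl k)
    (hx : ∀ k, 0 ≤ x k)
    (u : (Fin K → ℝ) → ℝ)
    (hmono : ∀ a b : Fin K → ℝ, (∀ k, a k ≤ b k) → a ≠ b → u a < u b)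
    (hrat : ∀ y : Fin K → ℝ, (∀ k, 0 ≤ y k) → dotp pl y ≤ dotp pl ql → u y ≤ u ql)
    (hux : u ql ≤ u x) : dotp pl ql ≤ dotp pl x := by
  by_contra h
  push_neg at h
  have hS : 0 < ∑ k, pl k :=
    Finset.sum_pos (fun k _ => hp k) (Finset.univ_nonempty_iff.2 ⟨⟨0, hK⟩⟩)
  set ε := (dotp pl ql - dotp pl x) / (∑ k, pl k) with hε
  have hε0 : 0 < ε := div_pos (by linarith) hS
  set y := fun k => x k + ε with hy
  have hdy : dotp pl y = dotp pl ql := by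
    simp only [dotp, hy, mul_add, Finset.sum_add_distrib, ← Finset.sum_mul]
    rw [hε]
    field_simp
    simp only [dotp]
    ring
  have h1 : u y ≤ u ql := hrat y (fun k => add_nonneg (hx k) hε0.le) hdy.le
  have h2 : u x < u y := by
    refine hmono x y (fun k => by simp [hy, hε0.le]) ?_
    intro hxy
    have := congrFun hxy ⟨0, hK⟩
    simp [hy] at this
    linarith
  linarith

/-- Laspeyres-style multilateral sandwich: if a locally non-satiated,
continuous, concave, strictly monotone utility `u_RC` rationalises the dataset then
for every country pair `(i, j)`, with indifference base `u_RC(q_i)`: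
`min price relative ≤ M⁻ ratio ≤ Konüs index ≤ M⁺ ratio ≤ Laspeyres index`. -/
theorem stmt_12 {N K : ℕ} (hK : 0 < K) (p q : Fin N → Fin K → ℝ)
    (hp : ∀ i k, 0 < p i k) (hq : ∀ i k, 0 ≤ q i k)
    (hm : ∀ i, 0 < dotp (p i) (q i))
    (u_RC : (Fin K → ℝ) → ℝ)
    (hcont : Continuous u_RC)
    (hconc : ConcaveOn ℝ {x : Fin K → ℝ | ∀ k, 0 ≤ x k} u_RC)
    (hmono : ∀ x y : Fin K → ℝ, (∀ k, x k ≤ y k) → x ≠ y → u_RC x < u_RC y)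
    (hlns : ∀ x : Fin K → ℝ, (∀ k, 0 ≤ x k) → ∀ ε > (0 : ℝ),
      ∃ y : Fin K → ℝ, (∀ k, 0 ≤ y k) ∧ dist y x < ε ∧ u_RC x < u_RC y)
    (hrat : ∀ i, ∀ x : Fin K → ℝ, (∀ k, 0 ≤ x k) →
      dotp (p i) x ≤ dotp (p i) (q i) → u_RC x ≤ u_RC (q i))
    (i j : Fin N) :
    (⨅ k : Fin K, p j k / p i k) ≤ Mminus p q (p j) i / Mminus p q (p i) i ∧
    Mminus p q (p j) i / Mminus p q (p i) i
      ≤ expend u_RC (p j) (q i) / expend u_RC (p i) (q i) ∧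
    expend u_RC (p j) (q i) / expend u_RC (p i) (q i)
      ≤ Mplus p q (p j) i / Mplus p q (p i) i ∧
    Mplus p q (p j) i / Mplus p q (p i) i ≤ dotp (p j) (q i) / dotp (p i) (q i) := by
  have key : ∀ (l : Fin N) (x : Fin K → ℝ), (∀ k, 0 ≤ x k) →
      u_RC (q l) ≤ u_RC x → dotp (p l) (q l) ≤ dotp (p l) x := fun l x hx hux =>
    key_bump hK (p l) x (q l) (hp l) hx u_RC hmono (fun y hy hyl => hrat l y hy hyl) hux
  have walk : ∀ a b, RPrel p q a b → u_RC (q b) ≤ u_RC (q a) := by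
    intro a b h
    induction h with
    | refl => exact le_refl _
    | tail _ hbc ih => exact le_trans (hrat _ (q _) (hq _) hbc) ih
  set m := dotp (p i) (q i) with hmdef
  have hm0 : 0 < m := hm i
  -- the three defining sets, for a generic price vector pr
  have hqifeas : ∀ l ∈ VRW p q i, dotp (p l) (q l) ≤ dotp (p l) (q i) :=
    fun l hl => key l (q i) (hq i) (walk i l hl)
  have memM : ∀ pr : Fin K → ℝ, dotp pr (q i) ∈
      {r | ∃ x : Fin K → ℝ, (∀ k, 0 ≤ x k) ∧
        (∀ l ∈ VRW p q i, dotp (p l) (q l) ≤ dotp (p l) x) ∧ r = dotp pr x} :=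
    fun pr => ⟨q i, hq i, hqifeas, rfl⟩
  have memE : ∀ pr : Fin K → ℝ, dotp pr (q i) ∈
      {r | ∃ x : Fin K → ℝ, (∀ k, 0 ≤ x k) ∧ u_RC (q i) ≤ u_RC x ∧ r = dotp pr x} :=
    fun pr => ⟨q i, hq i, le_refl _, rfl⟩
  have memP : ∀ pr : Fin K → ℝ, dotp pr (q i) ∈
      {r | ∃ l ∈ VRP p q i, r = dotp pr (q l)} :=
    fun pr => ⟨i, Relation.ReflTransGen.refl, rfl⟩
  have hiVRW : i ∈ VRW p q i := Relation.ReflTransGen.refl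
  -- bddBelow by 0 for pr with nonneg entries
  have bddM : ∀ pr : Fin K → ℝ, (∀ k, 0 ≤ pr k) → BddBelow
      {r | ∃ x : Fin K → ℝ, (∀ k, 0 ≤ x k) ∧
        (∀ l ∈ VRW p q i, dotp (p l) (q l) ≤ dotp (p l) x) ∧ r = dotp pr x} := by
    rintro pr hpr
    exact ⟨0, by rintro r ⟨x, hx, -, rfl⟩; exact dotp_nonneg' hpr hx⟩
  have bddE : ∀ pr : Fin K → ℝ, (∀ k, 0 ≤ pr k) → BddBelow
      {r | ∃ x : Fin K → ℝ, (∀ k, 0 ≤ x k) ∧ u_RC (q i) ≤ u_RC x ∧ r = dotp pr x} := by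
    rintro pr hpr
    exact ⟨0, by rintro r ⟨x, hx, -, rfl⟩; exact dotp_nonneg' hpr hx⟩
  have bddP : ∀ pr : Fin K → ℝ, (∀ k, 0 ≤ pr k) → BddBelow
      {r | ∃ l ∈ VRP p q i, r = dotp pr (q l)} := by
    rintro pr hpr
    exact ⟨0, by rintro r ⟨l, -, rfl⟩; exact dotp_nonneg' hpr (hq l)⟩
  -- values at base price p i are all equal to m
  have hEi : expend u_RC (p i) (q i) = m := by
    refine le_antisymm (csInf_le (bddE (p i) fun k => (hp i k).le) (memE (p i)))
      (le_csInf ⟨_, memE (p i)⟩ ?_)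
    rintro r ⟨x, hx, hux, rfl⟩
    exact key i x hx hux
  have hMi : Mminus p q (p i) i = m := by
    refine le_antisymm (csInf_le (bddM (p i) fun k => (hp i k).le) (memM (p i)))
      (le_csInf ⟨_, memM (p i)⟩ ?_)
    rintro r ⟨x, hx, hcon, rfl⟩
    exact hcon i hiVRW
  have hPi : Mplus p q (p i) i = m := by
    refine le_antisymm (csInf_le (bddP (p i) fun k => (hp i k).le) (memP (p i)))
      (le_csInf ⟨_, memP (p i)⟩ ?_)
    rintro r ⟨l, hl, rfl⟩
    exact key i (q l) (hq l) (walk l i hl)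
  -- chain at price p j
  have hAB : Mminus p q (p j) i ≤ expend u_RC (p j) (q i) := by
    refine csInf_le_csInf (bddM (p j) fun k => (hp j k).le) ⟨_, memE (p j)⟩ ?_
    rintro r ⟨x, hx, hux, rfl⟩
    exact ⟨x, hx, fun l hl => key l x hx (le_trans (walk i l hl) hux), rfl⟩
  have hBC : expend u_RC (p j) (q i) ≤ Mplus p q (p j) i := by
    refine le_csInf ⟨_, memP (p j)⟩ ?_
    rintro r ⟨l, hl, rfl⟩
    exact csInf_le (bddE (p j) fun k => (hp j k).le) ⟨q l, hq l, walk l i hl, rfl⟩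
  have hCL : Mplus p q (p j) i ≤ dotp (p j) (q i) :=
    csInf_le (bddP (p j) fun k => (hp j k).le) (memP (p j))
  -- lower bound for Mminus at p j
  set c := ⨅ k : Fin K, p j k / p i k with hc
  have hc0 : 0 ≤ c := by
    have : Nonempty (Fin K) := ⟨⟨0, hK⟩⟩
    exact le_ciInf fun k => (div_pos (hp j k) (hp i k)).le
  have hcA : c * m ≤ Mminus p q (p j) i := by
    refine le_csInf ⟨_, memM (p j)⟩ ?_
    rintro r ⟨x, hx, hcon, rfl⟩
    have h1 : m ≤ dotp (p i) x := hcon i hiVRW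
    have h2 : c * dotp (p i) x ≤ dotp (p j) x := by
      rw [dotp, dotp, Finset.mul_sum]
      refine Finset.sum_le_sum fun k _ => ?_
      have hck : c ≤ p j k / p i k := ciInf_le (Set.Finite.bddBelow (Set.finite_range _)) k
      have h3 : (p j k / p i k) * (p i k * x k) = p j k * x k := by
        rw [← mul_assoc, div_mul_cancel₀ _ (hp i k).ne']
      calc c * (p i k * x k) ≤ (p j k / p i k) * (p i k * x k) :=
            mul_le_mul_of_nonneg_right hck (mul_nonneg (hp i k).le (hx k))
        _ = p j k * x k := h3
    calc c * m ≤ c * dotp (p i) x := mul_le_mul_of_nonneg_left h1 hc0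
      _ ≤ dotp (p j) x := h2
  rw [hEi, hMi, hPi]
  exact ⟨(le_div_iff₀ hm0).2 hcA, (div_le_div_iff_of_pos_right hm0).2 hAB,
    (div_le_div_iff_of_pos_right hm0).2 hBC, (div_le_div_iff_of_pos_right hm0).2 hCL⟩
end
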